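/- Let x : ℤ → ℝ be a sequence of positive reals satisfying x_{n+4} x_n = x_{n+2}^2 + x_{n+3} x_{n+1} for all n ∈ ℤ. Define y_n := x_{n+2} x_n / x_{n+1}^2. Then y satisfies the q-Painlevé I recurrence: for all n ∈ ℤ, y_{n+4} y_n (1/y_{n+2} + 1)^2 = (y_{n+3} + 1)(y_{n+1} + 1). -/

import Mathlib

/-- If positive `x : ℤ → ℝ` satisfies the q-PI bilinear equation, then
`y n := x (n+2) * x n / (x (n+1))^2` satisfies the q-Painlevé I recurrence. -/
theorem qPI_bilinear_to_recurrence
    (x : ℤ → ℝ) (hx : ∀ n : ℤ, 0 < x n)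
    (hbil : ∀ n : ℤ, x (n + 4) * x n = (x (n + 2)) ^ 2 + x (n + 3) * x (n + 1))
    (y : ℤ → ℝ) (hy : ∀ n : ℤ, y n = x (n + 2) * x n / (x (n + 1)) ^ 2) :
    ∀ n : ℤ,
      y (n + 4) * y n * (1 / y (n + 2) + 1) ^ 2 = (y (n + 3) + 1) * (y (n + 1) + 1) := by
  intro n
  have hne : ∀ m : ℤ, x m ≠ 0 := fun m => (hx m).ne'
  rw [hy (n + 4), hy n, hy (n + 2), hy (n + 3), hy (n + 1)]
  simp only [show n + 4 + 2 = n + 6 from by ring, show n + 4 + 1 = n + 5 from by ring,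
    show n + 2 + 2 = n + 4 from by ring, show n + 2 + 1 = n + 3 from by ring,
    show n + 3 + 2 = n + 5 from by ring, show n + 3 + 1 = n + 4 from by ring,
    show n + 1 + 2 = n + 3 from by ring, show n + 1 + 1 = n + 2 from by ring]
  have b0 := hbil n
  have b1 := hbil (n + 1)
  have b2 := hbil (n + 2)
  simp only [show n + 1 + 4 = n + 5 from by ring, show n + 1 + 3 = n + 4 from by ring,
    show n + 1 + 2 = n + 3 from by ring, show n + 1 + 1 = n + 2 from by ring,
    show n + 2 + 4 = n + 6 from by ring, show n + 2 + 3 = n + 5 from by ring,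
    show n + 2 + 2 = n + 4 from by ring, show n + 2 + 1 = n + 3 from by ring] at b1 b2
  have h0 := hne n; have h1 := hne (n+1); have h2 := hne (n+2); have h3 := hne (n+3)
  have h4 := hne (n+4); have h5 := hne (n+5); have h6 := hne (n+6)
  field_simp
  linear_combination
      (x (n+4) * x n * (x (n+3)^2 + x (n+4) * x (n+2))^2) * b2
    + ((x (n+4)^2 + x (n+5) * x (n+3)) * (x (n+3)^2 + x (n+4) * x (n+2))^2) * b0
    - ((x (n+4)^2 + x (n+5) * x (n+3)) * (x (n+2)^2 + x (n+3) * x (n+1)) *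
        (x (n+3)^2 + x (n+4) * x (n+2) + x (n+5) * x (n+1))) * b1
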